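/- Let X be a Banach space with dim(X) ≥ 2. Then the pair (X, ℓ∞²) fails property L_{o,p}. -/

import Mathlib

/-- The pair `(X, Y)` has property `L_{o,p}`: for every `ε > 0` and `x ∈ S_X` there is
`η(ε, x) > 0` such that any norm-one operator `T` with `‖T x‖ > 1 - η` attains its norm at a
point `x₀ ∈ S_X` with `‖x₀ - x‖ < ε`. -/
def HasLop (𝕜 X Y : Type*) [RCLike 𝕜] [NormedAddCommGroup X] [NormedSpace 𝕜 X]
    [NormedAddCommGroup Y] [NormedSpace 𝕜 Y] : Prop :=
  ∀ ε : ℝ, 0 < ε → ∀ x : X, ‖x‖ = 1 →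
    ∃ η : ℝ, 0 < η ∧ ∀ T : X →L[𝕜] Y, ‖T‖ = 1 → 1 - η < ‖T x‖ →
      ∃ x₀ : X, ‖x₀‖ = 1 ∧ ‖T x₀‖ = 1 ∧ ‖x₀ - x‖ < ε

/-- The pair `(X, Y)` has property `L_{p,o}`: for every `ε > 0` and norm-one operator `T` there
is `η(ε, T) > 0` such that whenever `x ∈ S_X` satisfies `‖T x‖ > 1 - η`, there is a norm-one
operator `S` attaining its norm at `x` with `‖S - T‖ < ε`. -/
def HasLpo (𝕜 X Y : Type*) [RCLike 𝕜] [NormedAddCommGroup X] [NormedSpace 𝕜 X]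
    [NormedAddCommGroup Y] [NormedSpace 𝕜 Y] : Prop :=
  ∀ ε : ℝ, 0 < ε → ∀ T : X →L[𝕜] Y, ‖T‖ = 1 →
    ∃ η : ℝ, 0 < η ∧ ∀ x : X, ‖x‖ = 1 → 1 - η < ‖T x‖ →
      ∃ S : X →L[𝕜] Y, ‖S‖ = 1 ∧ ‖S x‖ = 1 ∧ ‖S - T‖ < ε

/-- If `X` is a Banach space with `dim X ≥ 2`, then the pair `(X, ℓ∞²)` fails
property `L_{o,p}`. Here `ℓ∞²` is `Fin 2 → 𝕜` with the sup norm. -/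
theorem fails_lop_linfty2 (𝕜 X : Type*) [RCLike 𝕜] [NormedAddCommGroup X]
    [NormedSpace 𝕜 X] [CompleteSpace X] (hdim : 2 ≤ Module.rank 𝕜 X) :
    ¬ HasLop 𝕜 X (Fin 2 → 𝕜) := by
  intro hL
  have h1 : 1 < Module.rank 𝕜 X := lt_of_lt_of_le (by norm_num) hdim
  have : Nontrivial X := by
    rw [← rank_pos_iff_nontrivial (R := 𝕜)]
    exact lt_trans zero_lt_one h1
  obtain ⟨v, hv⟩ := exists_ne (0 : X)
  set x₁ : X := ((‖v‖ : 𝕜))⁻¹ • v with hx₁def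
  have hnx₁ : ‖x₁‖ = 1 := by
    rw [hx₁def, norm_smul, norm_inv, RCLike.norm_ofReal, abs_of_nonneg (norm_nonneg v)]
    exact inv_mul_cancel₀ (norm_ne_zero_iff.mpr hv)
  have hx₁ne : x₁ ≠ 0 := by
    intro h; rw [h, norm_zero] at hnx₁; norm_num at hnx₁
  obtain ⟨f₁, hf₁n, hf₁x⟩ := exists_dual_vector 𝕜 x₁ (norm_ne_zero_iff.mpr hx₁ne)
  have hf₁x1 : f₁ x₁ = 1 := by rw [hf₁x, hnx₁]; norm_num
  obtain ⟨x₂, hind⟩ := exists_linearIndependent_pair_of_one_lt_rank h1 hx₁ne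
  -- y' is nonzero and killed by f₁
  set y' : X := x₂ - (f₁ x₂) • x₁ with hy'def
  have hy'ne : y' ≠ 0 := by
    intro h
    have := (LinearIndependent.pair_iff.mp hind) (f₁ x₂) (-1)
      (by rw [neg_one_smul]; rw [hy'def] at h; abel_nf; abel_nf at h; linear_combination (norm := module) -h)
    simpa using this.2
  have hf₁y' : f₁ y' = 0 := by
    simp [hy'def, map_sub, map_smul, hf₁x1, smul_eq_mul]
  obtain ⟨g, hgy'⟩ := SeparatingDual.exists_eq_one (R := 𝕜) hy'ne
  set f : X →L[𝕜] 𝕜 := g - (g x₁) • f₁ with hfdef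
  have hfx₁ : f x₁ = 0 := by simp [hfdef, hf₁x1]
  have hfy' : f y' = 1 := by simp [hfdef, hf₁y', hgy']
  have hfne : ‖f‖ ≠ 0 := by
    intro h
    have : f = 0 := norm_eq_zero.mp h
    rw [this] at hfy'; simp at hfy'
  set f₂ : X →L[𝕜] 𝕜 := ((‖f‖ : 𝕜))⁻¹ • f with hf₂def
  have hf₂n : ‖f₂‖ = 1 := by
    have h := norm_smul ((‖f‖ : 𝕜))⁻¹ f
    rw [hf₂def, h, norm_inv, RCLike.norm_ofReal, abs_of_nonneg (norm_nonneg f)]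
    exact inv_mul_cancel₀ hfne
  have hf₂x₁ : f₂ x₁ = 0 := by simp [hf₂def, hfx₁]
  -- apply HasLop with ε = 1/2
  obtain ⟨η, hη, hprop⟩ := hL (1/2) (by norm_num) x₁ hnx₁
  set a : ℝ := 1 - min η 1 / 2 with hadef
  have hmin : 0 < min η 1 := lt_min hη one_pos
  have hmin1 : min η 1 ≤ 1 := min_le_right _ _
  have ha0 : 0 ≤ a := by rw [hadef]; linarith
  have ha1 : a < 1 := by rw [hadef]; linarith
  have haη : 1 - η < a := by
    have := min_le_left η 1
    rw [hadef]; linarith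
  set c : 𝕜 := (a : 𝕜) with hcdef
  have hcn : ‖c‖ = a := by rw [hcdef, RCLike.norm_ofReal, abs_of_nonneg ha0]
  set T : X →L[𝕜] Fin 2 → 𝕜 := ContinuousLinearMap.pi ![c • f₁, f₂] with hTdef
  have hT0 : ∀ w : X, T w 0 = c * f₁ w := fun w => rfl
  have hT1 : ∀ w : X, T w 1 = f₂ w := fun w => rfl
  have hTle : ∀ w : X, ‖T w‖ ≤ ‖w‖ := by
    intro w
    rw [pi_norm_le_iff_of_nonneg (norm_nonneg w), Fin.forall_fin_two]
    constructor
    · rw [hT0, norm_mul, hcn]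
      calc a * ‖f₁ w‖ ≤ 1 * ‖f₁ w‖ := by
            apply mul_le_mul_of_nonneg_right (le_of_lt ha1) (norm_nonneg _)
        _ = ‖f₁ w‖ := one_mul _
        _ ≤ ‖f₁‖ * ‖w‖ := f₁.le_opNorm w
        _ = ‖w‖ := by rw [hf₁n, one_mul]
    · rw [hT1]
      calc ‖f₂ w‖ ≤ ‖f₂‖ * ‖w‖ := f₂.le_opNorm w
        _ = ‖w‖ := by rw [hf₂n, one_mul]
  have hTn : ‖T‖ = 1 := by
    apply le_antisymm
    · exact T.opNorm_le_bound zero_le_one (by simpa using hTle)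
    · rw [← hf₂n]
      apply f₂.opNorm_le_bound (norm_nonneg T)
      intro w
      calc ‖f₂ w‖ = ‖T w 1‖ := by rw [hT1]
        _ ≤ ‖T w‖ := norm_le_pi_norm _ 1
        _ ≤ ‖T‖ * ‖w‖ := T.le_opNorm w
  have hTx₁ : ‖T x₁‖ = a := by
    apply le_antisymm
    · rw [pi_norm_le_iff_of_nonneg ha0, Fin.forall_fin_two]
      constructor
      · rw [hT0, hf₁x1, mul_one, hcn]
      · rw [hT1, hf₂x₁, norm_zero]; exact ha0
    · calc a = ‖T x₁ 0‖ := by rw [hT0, hf₁x1, mul_one, hcn]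
        _ ≤ ‖T x₁‖ := norm_le_pi_norm _ 0
  obtain ⟨x₀, hx₀n, hTx₀, hx₀x₁⟩ := hprop T hTn (by rw [hTx₁]; exact haη)
  -- contradiction
  have : ‖T x₀‖ ≤ max a ‖x₀ - x₁‖ := by
    rw [pi_norm_le_iff_of_nonneg (le_max_of_le_left ha0), Fin.forall_fin_two]
    constructor
    · apply le_max_of_le_left
      rw [hT0, norm_mul, hcn]
      calc a * ‖f₁ x₀‖ ≤ a * (‖f₁‖ * ‖x₀‖) :=
            mul_le_mul_of_nonneg_left (f₁.le_opNorm x₀) ha0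
        _ = a := by rw [hf₁n, hx₀n]; ring
    · apply le_max_of_le_right
      rw [hT1]
      have : f₂ x₀ = f₂ (x₀ - x₁) := by rw [map_sub, hf₂x₁, sub_zero]
      rw [this]
      calc ‖f₂ (x₀ - x₁)‖ ≤ ‖f₂‖ * ‖x₀ - x₁‖ := f₂.le_opNorm _
        _ = ‖x₀ - x₁‖ := by rw [hf₂n, one_mul]
  rw [hTx₀] at this
  have hmax : max a ‖x₀ - x₁‖ < 1 := max_lt ha1 (by linarith)
  linarith
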